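/- arXiv:1904.11871 — 5 statements merged into one kernel-verified Lean document; each statement's English description precedes it below -/
import Mathlib

section
/- Let X_1, X_2, ... be i.i.d. copies of X, let a, b : ℝ → ℝ be measurable with E[a(X)²] < ∞ and E[b(X)²] < ∞, and let v, w, n be positive integers. Define the sample means Ā_m = (1/m)Σ_{i=1}^m a(X_i) and B̄_m = (1/m)Σ_{i=1}^m b(X_i). Then, exactly for every n, n·Cov(Ā_{vn}, B̄_{wn}) = Cov(a(X_1), b(X_1))/max(v,w); moreover, if Var(a(X_1)) > 0 and Var(b(X_1)) > 0, then Cor(Ā_{vn}, B̄_{wn}) = √(min(v,w)/max(v,w))·Cor(a(X_1), b(X_1)). In particular, the asymptotic covariance of √n·Ā_{vn} and √n·B̄_{wn} is 1/max(v,w) times that for equal sample sizes v = w = 1, and the correlation scales by √(min(v,w)/max(v,w)). -/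
open MeasureTheory ProbabilityTheory Filter Topology

noncomputable section

variable {Ω : Type*} [MeasurableSpace Ω]

/-- The cumulative distribution function of `X` under `P`. -/
def cdf' (P : Measure Ω) (X : Ω → ℝ) (x : ℝ) : ℝ := (P {ω | X ω ≤ x}).toReal

/-- The lower quantile of order `p` : `q_X(p) = inf {x : p ≤ F_X x}`. -/
def quantile' (P : Measure Ω) (X : Ω → ℝ) (p : ℝ) : ℝ := sInf {x : ℝ | p ≤ cdf' P X x}

/-- The `k`-th order statistic (1-based) of a list of reals. -/
def orderStat (l : List ℝ) (k : ℕ) : ℝ := (l.insertionSort (· ≤ ·)).getD (k - 1) 0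

/-- The sample quantile `q_n(p) = X_(⌈np⌉)`. -/
def sampleQuantile (X : ℕ → Ω → ℝ) (p : ℝ) (n : ℕ) (ω : Ω) : ℝ :=
  orderStat (List.ofFn fun i : Fin n => X i ω) ⌈(n : ℝ) * p⌉₊

/-- The sample mean `X̄_n`. -/
def sampleMean (X : ℕ → Ω → ℝ) (n : ℕ) (ω : Ω) : ℝ :=
  (∑ i ∈ Finset.range n, X i ω) / n

/-- The (unbiased) sample variance `σ̂_n²`. -/
def sampleVar (X : ℕ → Ω → ℝ) (n : ℕ) (ω : Ω) : ℝ :=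
  (∑ i ∈ Finset.range n, (X i ω - sampleMean X n ω) ^ 2) / ((n : ℝ) - 1)

/-- The sample mean absolute deviation `θ̂_n`. -/
def sampleMAD (X : ℕ → Ω → ℝ) (n : ℕ) (ω : Ω) : ℝ :=
  (∑ i ∈ Finset.range n, |X i ω - sampleMean X n ω|) / n

/-- The `r`-th absolute central sample moment with estimated mean, `m̂(X,n,r)`. -/
def sampleAbsMom (X : ℕ → Ω → ℝ) (r : ℕ) (n : ℕ) (ω : Ω) : ℝ :=
  (∑ i ∈ Finset.range n, |X i ω - sampleMean X n ω| ^ r) / n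

/-- The `r`-th absolute sample moment with known mean `μ`, `m̃(X,n,r)`. -/
def tildeAbsMom (X : ℕ → Ω → ℝ) (μ : ℝ) (r : ℕ) (n : ℕ) (ω : Ω) : ℝ :=
  (∑ i ∈ Finset.range n, |X i ω - μ| ^ r) / n

/-- The sample median `ν̂_n`. -/
def sampleMedian (X : ℕ → Ω → ℝ) (n : ℕ) (ω : Ω) : ℝ :=
  (orderStat (List.ofFn fun i : Fin n => X i ω) ((n + 1) / 2)
    + orderStat (List.ofFn fun i : Fin n => X i ω) ((n + 2) / 2)) / 2

/-- The sample median absolute deviation `ξ̂_n`. -/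
def sampleMedianAD (X : ℕ → Ω → ℝ) (n : ℕ) (ω : Ω) : ℝ :=
  (orderStat (List.ofFn fun i : Fin n => |X i ω - sampleMedian X n ω|) ((n + 1) / 2)
    + orderStat (List.ofFn fun i : Fin n => |X i ω - sampleMedian X n ω|) ((n + 2) / 2)) / 2

/-- Expectation. -/
def expec (P : Measure Ω) (Z : Ω → ℝ) : ℝ := ∫ ω, Z ω ∂P

/-- Covariance. -/
def cov' (P : Measure Ω) (Z W : Ω → ℝ) : ℝ :=
  ∫ ω, (Z ω - expec P Z) * (W ω - expec P W) ∂P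

/-- Pearson correlation. -/
def cor' (P : Measure Ω) (Z W : Ω → ℝ) : ℝ :=
  cov' P Z W / (Real.sqrt (variance Z P) * Real.sqrt (variance W P))

/-- `τ_k(η(X),p) = (1-p) (E[η^k(X) | X > q_X(p)] - E[η^k(X)])`. -/
def tau' (P : Measure Ω) (X : Ω → ℝ) (η : ℝ → ℝ) (k : ℕ) (p : ℝ) : ℝ :=
  (1 - p) * ((∫ ω in {ω | quantile' P X p < X ω}, (η (X ω)) ^ k ∂P)
      / (P {ω | quantile' P X p < X ω}).toReal
    - ∫ ω, (η (X ω)) ^ k ∂P)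

/-- Convergence in distribution: weak convergence of the laws. -/
def TendstoInDistr (P : Measure Ω) {E : Type*} [MeasurableSpace E] [TopologicalSpace E]
    (Z : ℕ → Ω → E) (μ : Measure E) : Prop :=
  ∀ f : BoundedContinuousFunction E ℝ,
    Tendsto (fun n => ∫ ω, f (Z n ω) ∂P) atTop (𝓝 (∫ x, f x ∂μ))

/-- Convergence to `0` in probability. -/
def TendstoInProb (P : Measure Ω) (Z : ℕ → Ω → ℝ) : Prop :=
  ∀ ε : ℝ, 0 < ε → Tendsto (fun n => P {ω | ε ≤ |Z n ω|}) atTop (𝓝 0)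

/-- A centered bivariate Gaussian measure with covariance matrix `(S11 S12; S12 S22)`,
characterized through its one-dimensional linear marginals. -/
def IsCenteredGaussian2 (G : Measure (ℝ × ℝ)) (S11 S12 S22 : ℝ) : Prop :=
  IsProbabilityMeasure G ∧ ∀ a b : ℝ,
    G.map (fun x => a * x.1 + b * x.2)
      = gaussianReal 0 (a ^ 2 * S11 + 2 * a * b * S12 + b ^ 2 * S22).toNNReal

/-- A centered Gaussian measure on `ℝ^d` with covariance matrix `C`,
characterized through its one-dimensional linear marginals. -/
def IsCenteredGaussianVec {d : ℕ} (G : Measure (Fin d → ℝ)) (C : Matrix (Fin d) (Fin d) ℝ) : Prop :=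
  IsProbabilityMeasure G ∧ ∀ a : Fin d → ℝ,
    G.map (fun x => ∑ i, a i * x i)
      = gaussianReal 0 (∑ i, ∑ j, a i * C i j * a j).toNNReal

/-- `X 0, X 1, ...` are i.i.d. under `P`. -/
def IsIIDof (P : Measure Ω) (X : ℕ → Ω → ℝ) : Prop :=
  (∀ i, Measurable (X i)) ∧ iIndepFun X P
    ∧ ∀ i, IdentDistrib (X i) (X 0) P P


lemma integrable_mul_of_memL2 {P : Measure Ω} {f g : Ω → ℝ}
    (hf : MemLp f 2 P) (hg : MemLp g 2 P) : Integrable (fun ω => f ω * g ω) P := by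
  rw [← memLp_one_iff_integrable]
  have h := hg.smul (φ := f) hf (r := 1)
    (hpqr := ⟨by rw [ENNReal.inv_two_add_inv_two, inv_one]⟩)
  simpa [smul_eq_mul, Pi.mul_def] using h

lemma cov'_eq {P : Measure Ω} [IsProbabilityMeasure P] {f g : Ω → ℝ}
    (hf : MemLp f 2 P) (hg : MemLp g 2 P) :
    cov' P f g = expec P (fun ω => f ω * g ω) - expec P f * expec P g := by
  have hfi := hf.integrable one_le_two
  have hgi := hg.integrable one_le_two
  have hfg := integrable_mul_of_memL2 hf hg
  unfold cov' expec
  have key : ∀ ω, (f ω - ∫ ω, f ω ∂P) * (g ω - ∫ ω, g ω ∂P)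
      = f ω * g ω - (((∫ ω, f ω ∂P) * g ω + (∫ ω, g ω ∂P) * f ω)
          - (∫ ω, f ω ∂P) * (∫ ω, g ω ∂P)) := fun ω => by ring
  simp_rw [key]
  have h1 : Integrable (fun ω => (∫ ω, f ω ∂P) * g ω + (∫ ω, g ω ∂P) * f ω
      - (∫ ω, f ω ∂P) * ∫ ω, g ω ∂P) P :=
    ((hgi.const_mul _).add (hfi.const_mul _)).sub (integrable_const _)
  have h2 : Integrable (fun ω => (∫ ω, f ω ∂P) * g ω + (∫ ω, g ω ∂P) * f ω) P :=
    (hgi.const_mul _).add (hfi.const_mul _)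
  rw [integral_sub hfg h1, integral_sub h2 (integrable_const _),
    integral_add (hgi.const_mul _) (hfi.const_mul _), integral_const_mul, integral_const_mul,
    integral_const]
  simp [measure_univ]
  ring

lemma cov'_indep {P : Measure Ω} [IsProbabilityMeasure P] {f g : Ω → ℝ}
    (h : IndepFun f g P) (hf : MemLp f 2 P) (hg : MemLp g 2 P) : cov' P f g = 0 := by
  rw [cov'_eq hf hg]
  have h2 := h.integral_mul_eq_mul_integral hf.aestronglyMeasurable hg.aestronglyMeasurable
  unfold expec
  rw [show (fun ω => f ω * g ω) = f * g from rfl, h2]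
  ring

lemma cov'_sum {P : Measure Ω} [IsProbabilityMeasure P] {s t : Finset ℕ} {Z W : ℕ → Ω → ℝ}
    (hZ : ∀ i ∈ s, MemLp (Z i) 2 P) (hW : ∀ j ∈ t, MemLp (W j) 2 P) :
    cov' P (fun ω => ∑ i ∈ s, Z i ω) (fun ω => ∑ j ∈ t, W j ω)
      = ∑ i ∈ s, ∑ j ∈ t, cov' P (Z i) (W j) := by
  have hint : ∀ i ∈ s, ∀ j ∈ t, Integrable (fun ω => Z i ω * W j ω) P :=
    fun i hi j hj => integrable_mul_of_memL2 (hZ i hi) (hW j hj)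
  have l1 : expec P (fun ω => (∑ i ∈ s, Z i ω) * (∑ j ∈ t, W j ω))
      = ∑ i ∈ s, ∑ j ∈ t, expec P (fun ω => Z i ω * W j ω) := by
    unfold expec
    simp_rw [Finset.sum_mul_sum]
    rw [integral_finset_sum s (fun i hi => integrable_finset_sum t (fun j hj => hint i hi j hj))]
    exact Finset.sum_congr rfl fun i hi => integral_finset_sum t (fun j hj => hint i hi j hj)
  have l2 : expec P (fun ω => ∑ i ∈ s, Z i ω) = ∑ i ∈ s, expec P (Z i) :=
    integral_finset_sum s fun i hi => (hZ i hi).integrable one_le_two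
  have l3 : expec P (fun ω => ∑ j ∈ t, W j ω) = ∑ j ∈ t, expec P (W j) :=
    integral_finset_sum t fun j hj => (hW j hj).integrable one_le_two
  rw [cov'_eq (memLp_finset_sum s hZ) (memLp_finset_sum t hW), l1, l2, l3,
    Finset.sum_congr rfl (fun i hi => Finset.sum_congr rfl
      (fun j hj => cov'_eq (hZ i hi) (hW j hj)))]
  rw [Finset.sum_mul_sum]
  simp_rw [Finset.sum_sub_distrib]

lemma variance_eq_cov' {P : Measure Ω} [IsProbabilityMeasure P] {f : Ω → ℝ}
    (hf : MemLp f 2 P) : variance f P = cov' P f f := by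
  rw [variance_eq_integral hf.aestronglyMeasurable.aemeasurable]
  unfold cov' expec
  congr 1
  funext ω
  simp [sq]

lemma cov'_div (P : Measure Ω) (f g : Ω → ℝ) (c d : ℝ) :
    cov' P (fun ω => f ω / c) (fun ω => g ω / d) = cov' P f g / (c * d) := by
  unfold cov' expec
  simp only [integral_div]
  simp only [div_sub_div_same, div_mul_div_comm]
  rw [integral_div]

lemma memL2_comp_of_iid {P : Measure Ω} {X : ℕ → Ω → ℝ} (hiid : IsIIDof P X)
    {a : ℝ → ℝ} (ha : Measurable a) (ha2 : MemLp (fun ω => a (X 0 ω)) 2 P) (i : ℕ) :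
    MemLp (fun ω => a (X i ω)) 2 P :=
  ((hiid.2.2 i).comp ha).memLp_iff.mpr ha2

lemma cov'_sampleMeans {P : Measure Ω} [IsProbabilityMeasure P]
    {X : ℕ → Ω → ℝ} (hiid : IsIIDof P X)
    {a b : ℝ → ℝ} (ha : Measurable a) (hb : Measurable b)
    (ha2 : MemLp (fun ω => a (X 0 ω)) 2 P) (hb2 : MemLp (fun ω => b (X 0 ω)) 2 P)
    (m k : ℕ) :
    cov' P (fun ω => (∑ i ∈ Finset.range m, a (X i ω)) / (m : ℝ))
        (fun ω => (∑ i ∈ Finset.range k, b (X i ω)) / (k : ℝ))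
      = ((min m k : ℕ) : ℝ) * cov' P (fun ω => a (X 0 ω)) (fun ω => b (X 0 ω))
        / ((m : ℝ) * (k : ℝ)) := by
  obtain ⟨hmeas, hind, hid⟩ := hiid
  have hA2 : ∀ i, MemLp (fun ω => a (X i ω)) 2 P :=
    memL2_comp_of_iid ⟨hmeas, hind, hid⟩ ha ha2
  have hB2 : ∀ i, MemLp (fun ω => b (X i ω)) 2 P :=
    memL2_comp_of_iid ⟨hmeas, hind, hid⟩ hb hb2
  have hij : ∀ i j, i ≠ j →
      cov' P (fun ω => a (X i ω)) (fun ω => b (X j ω)) = 0 := fun i j h =>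
    cov'_indep ((hind.indepFun h).comp ha hb) (hA2 i) (hB2 j)
  have hii : ∀ i, cov' P (fun ω => a (X i ω)) (fun ω => b (X i ω))
      = cov' P (fun ω => a (X 0 ω)) (fun ω => b (X 0 ω)) := by
    intro i
    unfold cov' expec
    have e1 : ∫ ω, a (X i ω) ∂P = ∫ ω, a (X 0 ω) ∂P := ((hid i).comp ha).integral_eq
    have e2 : ∫ ω, b (X i ω) ∂P = ∫ ω, b (X 0 ω) ∂P := ((hid i).comp hb).integral_eq
    rw [e1, e2]
    exact ((hid i).comp ((ha.sub measurable_const).mul (hb.sub measurable_const))).integral_eq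
  rw [cov'_div, cov'_sum (fun i _ => hA2 i) (fun j _ => hB2 j)]
  congr 1
  have inner : ∀ i ∈ Finset.range m,
      ∑ j ∈ Finset.range k, cov' P (fun ω => a (X i ω)) (fun ω => b (X j ω))
        = if i ∈ Finset.range k then
            cov' P (fun ω => a (X 0 ω)) (fun ω => b (X 0 ω)) else 0 := by
    intro i _
    split_ifs with h
    · rw [Finset.sum_eq_single i (fun j _ hne => hij i j (Ne.symm hne)) (fun h' => (h' h).elim)]
      exact hii i
    · exact Finset.sum_eq_zero fun j hj => hij i j (by rintro rfl; exact h hj)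
  rw [Finset.sum_congr rfl inner, Finset.sum_ite_mem,
    show Finset.range m ∩ Finset.range k = Finset.range (min m k) by
      ext x; simp [Nat.lt_min],
    Finset.sum_const, Finset.card_range, nsmul_eq_mul]

/-- The exact scaling of covariance and correlation of sample means over overlapping
initial segments of lengths `vn` and `wn` of an i.i.d. sequence. -/
theorem stmt11
    (P : Measure Ω) [IsProbabilityMeasure P]
    (X : ℕ → Ω → ℝ) (hiid : IsIIDof P X)
    (a b : ℝ → ℝ) (ha : Measurable a) (hb : Measurable b)
    (ha2 : MemLp (fun ω => a (X 0 ω)) 2 P) (hb2 : MemLp (fun ω => b (X 0 ω)) 2 P)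
    (v w n : ℕ) (hv : 0 < v) (hw : 0 < w) (hn : 0 < n) :
    (n : ℝ) * cov' P
        (fun ω => (∑ i ∈ Finset.range (v * n), a (X i ω)) / (v * n : ℕ))
        (fun ω => (∑ i ∈ Finset.range (w * n), b (X i ω)) / (w * n : ℕ))
      = cov' P (fun ω => a (X 0 ω)) (fun ω => b (X 0 ω)) / ((max v w : ℕ) : ℝ)
    ∧ (0 < variance (fun ω => a (X 0 ω)) P → 0 < variance (fun ω => b (X 0 ω)) P →
      cor' P (fun ω => (∑ i ∈ Finset.range (v * n), a (X i ω)) / (v * n : ℕ))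
          (fun ω => (∑ i ∈ Finset.range (w * n), b (X i ω)) / (w * n : ℕ))
        = Real.sqrt (((min v w : ℕ) : ℝ) / ((max v w : ℕ) : ℝ))
          * cor' P (fun ω => a (X 0 ω)) (fun ω => b (X 0 ω))) := by
  have hA2 : ∀ i, MemLp (fun ω => a (X i ω)) 2 P := memL2_comp_of_iid hiid ha ha2
  have hB2 : ∀ i, MemLp (fun ω => b (X i ω)) 2 P := memL2_comp_of_iid hiid hb hb2
  set c := cov' P (fun ω => a (X 0 ω)) (fun ω => b (X 0 ω)) with hc
  have hab := cov'_sampleMeans hiid ha hb ha2 hb2 (v * n) (w * n)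
  have haa := cov'_sampleMeans hiid ha ha ha2 ha2 (v * n) (v * n)
  have hbb := cov'_sampleMeans hiid hb hb hb2 hb2 (w * n) (w * n)
  -- numeric facts
  have hvn : (0 : ℝ) < ((v * n : ℕ) : ℝ) := by
    exact_mod_cast Nat.mul_pos hv hn
  have hwn : (0 : ℝ) < ((w * n : ℕ) : ℝ) := by
    exact_mod_cast Nat.mul_pos hw hn
  have hminvw : ((min (v * n) (w * n) : ℕ) : ℝ) = ((min v w : ℕ) : ℝ) * (n : ℝ) := by
    rw [min_mul_mul_right]
    push_cast
    ring
  have hmM : ((min v w : ℕ) : ℝ) * ((max v w : ℕ) : ℝ) = (v : ℝ) * (w : ℝ) := by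
    rw [← Nat.cast_mul, min_mul_max, Nat.cast_mul]
  have hM : (0 : ℝ) < ((max v w : ℕ) : ℝ) := by
    have : 0 < max v w := lt_max_of_lt_left hv
    exact_mod_cast this
  have hn' : (0 : ℝ) < (n : ℝ) := by exact_mod_cast hn
  have hv' : (0 : ℝ) < (v : ℝ) := by exact_mod_cast hv
  have hw' : (0 : ℝ) < (w : ℝ) := by exact_mod_cast hw
  constructor
  · rw [hab, hminvw]
    push_cast at hmM ⊢
    field_simp
    linear_combination (cov' P (fun ω => a (X 0 ω)) fun ω => b (X 0 ω)) * hmM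
  · intro hva hvb
    -- variances of the sample means
    have hbar2 : ∀ (g : ℝ → ℝ), Measurable g → MemLp (fun ω => g (X 0 ω)) 2 P → ∀ m : ℕ,
        MemLp (fun ω => (∑ i ∈ Finset.range m, g (X i ω)) / (m : ℝ)) 2 P := by
      intro g hg hg2 m
      have hs := memLp_finset_sum (μ := P) (p := 2) (Finset.range m)
        (fun i _ => memL2_comp_of_iid hiid hg hg2 i)
      have := hs.const_mul ((m : ℝ))⁻¹
      simpa [div_eq_mul_inv, mul_comm] using this
    have hVa : variance (fun ω => (∑ i ∈ Finset.range (v * n), a (X i ω)) / ((v * n : ℕ) : ℝ)) P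
        = variance (fun ω => a (X 0 ω)) P / ((v * n : ℕ) : ℝ) := by
      rw [variance_eq_cov' (hbar2 a ha ha2 (v * n)), haa, variance_eq_cov' ha2, min_self]
      field_simp
    have hVb : variance (fun ω => (∑ i ∈ Finset.range (w * n), b (X i ω)) / ((w * n : ℕ) : ℝ)) P
        = variance (fun ω => b (X 0 ω)) P / ((w * n : ℕ) : ℝ) := by
      rw [variance_eq_cov' (hbar2 b hb hb2 (w * n)), hbb, variance_eq_cov' hb2, min_self]
      field_simp
    set Va := variance (fun ω => a (X 0 ω)) P with hVadef
    set Vb := variance (fun ω => b (X 0 ω)) P with hVbdef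
    set sa := Real.sqrt Va with hsa
    set sb := Real.sqrt Vb with hsb
    have hsa0 : 0 < sa := Real.sqrt_pos.mpr hva
    have hsb0 : 0 < sb := Real.sqrt_pos.mpr hvb
    unfold cor'
    rw [hab, hVa, hVb, hminvw]
    rw [Real.sqrt_div (variance_nonneg _ _) _, Real.sqrt_div (variance_nonneg _ _) _]
    set t1 := Real.sqrt ((v * n : ℕ) : ℝ) with ht1
    set t2 := Real.sqrt ((w * n : ℕ) : ℝ) with ht2
    have ht10 : 0 < t1 := Real.sqrt_pos.mpr hvn
    have ht20 : 0 < t2 := Real.sqrt_pos.mpr hwn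
    have ht1sq : t1 ^ 2 = ((v * n : ℕ) : ℝ) := Real.sq_sqrt hvn.le
    have ht2sq : t2 ^ 2 = ((w * n : ℕ) : ℝ) := Real.sq_sqrt hwn.le
    have ht12 : t1 * t2 = Real.sqrt ((v : ℝ) * w) * n := by
      rw [ht1, ht2, ← Real.sqrt_mul hvn.le]
      have : ((v * n : ℕ) : ℝ) * ((w * n : ℕ) : ℝ) = ((v : ℝ) * w) * (n : ℝ) ^ 2 := by
        push_cast; ring
      rw [this, Real.sqrt_mul (by positivity), Real.sqrt_sq hn'.le]
    have hsqrtvw : 0 < Real.sqrt ((v : ℝ) * w) := Real.sqrt_pos.mpr (by positivity)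
    have hsqrtmM : Real.sqrt (((min v w : ℕ) : ℝ) / ((max v w : ℕ) : ℝ))
        = ((min v w : ℕ) : ℝ) / Real.sqrt ((v : ℝ) * w) := by
      have h1 : ((min v w : ℕ) : ℝ) / ((max v w : ℕ) : ℝ)
          = ((min v w : ℕ) : ℝ) ^ 2 / ((v : ℝ) * w) := by
        have hmin0 : (0 : ℝ) < ((min v w : ℕ) : ℝ) := by
          have : 0 < min v w := lt_min hv hw
          exact_mod_cast this
        rw [← hmM]
        push_cast at hmM hmin0 ⊢
        field_simp
      rw [h1, Real.sqrt_div (by positivity) _, Real.sqrt_sq (by positivity)]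
    rw [hsqrtmM]
    have key : ((v * n : ℕ) : ℝ) * ((w * n : ℕ) : ℝ) = t1 ^ 2 * t2 ^ 2 := by
      rw [ht1sq, ht2sq]
    rw [key]
    have hvw_t : Real.sqrt ((v : ℝ) * w) = t1 * t2 / n := by
      rw [ht12]; field_simp
    rw [hvw_t]
    field_simp
end
end

section
/- Let X be a real random variable with cdf F_X, let ν ∈ ℝ and ξ ≥ 0 satisfy F_X(ν) = 1/2 and F_X(ν+ξ) − F_X(ν−ξ) = 1/2, and let α, c ∈ ℝ. Then Var( α·1_{X ≤ ν} − c·1_{ν−ξ < X ≤ ν+ξ} ) = (1/4)·( c² + γ ), where γ := α² − 4αc·(1 − F_X(ν−ξ) − F_X(ν+ξ)). -/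
open MeasureTheory ProbabilityTheory Filter Topology

noncomputable section

variable {Ω : Type*} [MeasurableSpace Ω]

/-- Variance of `α·1_{X ≤ ν} − c·1_{ν−ξ < X ≤ ν+ξ}` for a median `ν` and MedianAD `ξ`. -/
theorem stmt13
    (P : Measure Ω) [IsProbabilityMeasure P]
    (X : Ω → ℝ) (hX : Measurable X)
    (ν ξ : ℝ) (hξ : 0 ≤ ξ)
    (hmed : cdf' P X ν = 1/2)
    (hmad : cdf' P X (ν + ξ) - cdf' P X (ν - ξ) = 1/2)
    (α c : ℝ) :
    variance (fun ω => α * (if X ω ≤ ν then (1:ℝ) else 0)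
        - c * (if ν - ξ < X ω ∧ X ω ≤ ν + ξ then (1:ℝ) else 0)) P
      = (c ^ 2 + (α ^ 2
          - 4 * α * c * (1 - cdf' P X (ν - ξ) - cdf' P X (ν + ξ)))) / 4 := by
  classical
  set A : Set Ω := {ω | X ω ≤ ν} with hAdef
  set B : Set Ω := {ω | ν - ξ < X ω ∧ X ω ≤ ν + ξ} with hBdef
  set S1 : Set Ω := {ω | X ω ≤ ν - ξ} with hS1def
  set S3 : Set Ω := {ω | X ω ≤ ν + ξ} with hS3def
  have hAm : MeasurableSet A := measurableSet_le hX measurable_const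
  have hS1m : MeasurableSet S1 := measurableSet_le hX measurable_const
  have hS3m : MeasurableSet S3 := measurableSet_le hX measurable_const
  have hBm : MeasurableSet B :=
    (measurableSet_lt measurable_const hX).inter (measurableSet_le hX measurable_const)
  have hCm : MeasurableSet (A ∩ B) := hAm.inter hBm
  have hBeq : B = S3 \ S1 := by
    ext ω
    simp only [hBdef, hS3def, hS1def, Set.mem_setOf_eq, Set.mem_diff, not_le]
    tauto
  have hCeq : A ∩ B = A \ S1 := by
    ext ω
    simp only [hAdef, hBdef, hS1def, Set.mem_inter_iff, Set.mem_setOf_eq, Set.mem_diff, not_le]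
    constructor
    · rintro ⟨h1, h2, h3⟩; exact ⟨h1, h2⟩
    · rintro ⟨h1, h2⟩; exact ⟨h1, h2, by linarith⟩
  have hsub1A : S1 ⊆ A := fun ω h => by
    simp only [hAdef, hS1def, Set.mem_setOf_eq] at *; linarith
  have hsub13 : S1 ⊆ S3 := fun ω h => by
    simp only [hS3def, hS1def, Set.mem_setOf_eq] at *; linarith
  set a := (P S1).toReal with ha
  set b := (P S3).toReal with hb
  have hPA : (P A).toReal = 1/2 := hmed
  have hPB : (P B).toReal = b - a := by
    rw [hBeq, measure_diff hsub13 hS1m.nullMeasurableSet (measure_ne_top P _),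
      ENNReal.toReal_sub_of_le (measure_mono hsub13) (measure_ne_top P _)]
  have hPC : (P (A ∩ B)).toReal = 1/2 - a := by
    rw [hCeq, measure_diff hsub1A hS1m.nullMeasurableSet (measure_ne_top P _),
      ENNReal.toReal_sub_of_le (measure_mono hsub1A) (measure_ne_top P _), hPA]
  have hbma : b - a = 1/2 := hmad
  -- rewrite the random variable with indicators
  have hZ : (fun ω => α * (if X ω ≤ ν then (1:ℝ) else 0)
        - c * (if ν - ξ < X ω ∧ X ω ≤ ν + ξ then (1:ℝ) else 0))
      = fun ω => A.indicator (fun _ => α) ω - B.indicator (fun _ => c) ω := by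
    funext ω
    by_cases h1 : X ω ≤ ν <;> by_cases h2 : ν - ξ < X ω ∧ X ω ≤ ν + ξ <;>
      simp [Set.indicator_apply, hAdef, hBdef, Set.mem_setOf_eq, h1, h2]
  rw [hZ]
  have hmem : MemLp (fun ω => A.indicator (fun _ => α) ω - B.indicator (fun _ => c) ω) 2 P :=
    (memLp_indicator_const 2 hAm α (Or.inr (measure_ne_top P _))).sub
      (memLp_indicator_const 2 hBm c (Or.inr (measure_ne_top P _)))
  rw [variance_eq_sub hmem]
  have hiA : Integrable (A.indicator (fun _ => α)) P := (integrable_const α).indicator hAm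
  have hiB : Integrable (B.indicator (fun _ => c)) P := (integrable_const c).indicator hBm
  have hiA2 : Integrable (A.indicator (fun _ => α^2)) P := (integrable_const _).indicator hAm
  have hiB2 : Integrable (B.indicator (fun _ => c^2)) P := (integrable_const _).indicator hBm
  have hiC2 : Integrable ((A ∩ B).indicator (fun _ => 2*α*c)) P := (integrable_const _).indicator hCm
  have hEZ : ∫ ω, (A.indicator (fun _ => α) ω - B.indicator (fun _ => c) ω) ∂P
      = α * (1/2) - c * (b - a) := by
    rw [integral_sub hiA hiB, integral_indicator_const _ hAm, integral_indicator_const _ hBm,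
      measureReal_def, measureReal_def, hPA, hPB]
    simp [mul_comm]
  have hZ2 : (fun ω => (A.indicator (fun _ => α) ω - B.indicator (fun _ => c) ω)^2)
      = fun ω => A.indicator (fun _ => α^2) ω + B.indicator (fun _ => c^2) ω
        - (A ∩ B).indicator (fun _ => 2*α*c) ω := by
    funext ω
    by_cases h1 : ω ∈ A <;> by_cases h2 : ω ∈ B <;>
      simp [Set.indicator_apply, h1, h2, Set.mem_inter_iff] <;> ring
  have hEZ2 : ∫ ω, (A.indicator (fun _ => α) ω - B.indicator (fun _ => c) ω)^2 ∂P
      = α^2 * (1/2) + c^2 * (b - a) - 2*α*c * (1/2 - a) := by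
    have hiAB : Integrable (fun ω => A.indicator (fun _ => α^2) ω + B.indicator (fun _ => c^2) ω) P :=
      hiA2.add hiB2
    rw [hZ2, integral_sub hiAB hiC2, integral_add hiA2 hiB2,
      integral_indicator_const _ hAm, integral_indicator_const _ hBm,
      integral_indicator_const _ hCm, measureReal_def, measureReal_def, measureReal_def, hPA, hPB, hPC]
    simp [mul_comm]
  simp only [Pi.pow_apply] at *
  rw [hEZ2, hEZ]
  have hc1 : cdf' P X (ν - ξ) = a := rfl
  have hc2 : cdf' P X (ν + ξ) = b := rfl
  rw [hc1, hc2]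
  have hb' : b = a + 1/2 := by linarith
  rw [hb']
  ring
end
end

section
/- Let X be a real random variable with cdf F_X, let p ∈ (0,1) and q = q_X(p) satisfy F_X(q) = p, let ν ∈ ℝ and ξ ≥ 0 satisfy F_X(ν) = 1/2 and F_X(ν+ξ) − F_X(ν−ξ) = 1/2, and let α, c ∈ ℝ. Then Cov( 1_{X > q}, α·1_{X ≤ ν} − c·1_{ν−ξ < X ≤ ν+ξ} ) = α·max(−p/2, (p−1)/2) − c·( max(0, F_X(ν+ξ) − max(F_X(ν−ξ), p)) − (1−p)/2 ). -/
open MeasureTheory ProbabilityTheory Filter Topology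

noncomputable section

variable {Ω : Type*} [MeasurableSpace Ω]

lemma cdf_mono' (P : Measure Ω) [IsProbabilityMeasure P] (X : Ω → ℝ) {a b : ℝ} (h : a ≤ b) :
    cdf' P X a ≤ cdf' P X b :=
  ENNReal.toReal_mono (measure_ne_top _ _) (measure_mono fun ω hω => le_trans hω h)

lemma meas_Ioc' (P : Measure Ω) [IsProbabilityMeasure P] (X : Ω → ℝ) (hX : Measurable X)
    (a b : ℝ) : (P {ω | a < X ω ∧ X ω ≤ b}).toReal = max 0 (cdf' P X b - cdf' P X a) := by
  rcases le_or_gt b a with h | h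
  · have he : {ω | a < X ω ∧ X ω ≤ b} = ∅ := by
      ext ω; simp only [Set.mem_setOf_eq, Set.mem_empty_iff_false, iff_false, not_and, not_le]
      intro h1; linarith
    rw [he, max_eq_left (by linarith [cdf_mono' P X h])]; simp
  · have hs : {ω | a < X ω ∧ X ω ≤ b} = {ω | X ω ≤ b} \ {ω | X ω ≤ a} := by
      ext ω; simp only [Set.mem_setOf_eq, Set.mem_diff, not_le]; tauto
    have hsub : {ω | X ω ≤ a} ⊆ {ω | X ω ≤ b} := fun ω hω => le_trans hω h.le
    rw [hs, measure_diff hsub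
      ((measurableSet_le hX measurable_const).nullMeasurableSet) (measure_ne_top _ _),
      ENNReal.toReal_sub_of_le (measure_mono hsub) (measure_ne_top _ _),
      max_eq_right (sub_nonneg.2 (cdf_mono' P X h.le))]
    rfl

lemma integral_ite' (P : Measure Ω) [IsProbabilityMeasure P] {s : Set Ω} (hs : MeasurableSet s)
    (f : Ω → ℝ) (hf : f = s.indicator (fun _ => (1:ℝ))) :
    ∫ ω, f ω ∂P = (P s).toReal := by
  rw [hf]; exact integral_indicator_one hs

lemma integrable_ite' (P : Measure Ω) [IsProbabilityMeasure P] {s : Set Ω} (hs : MeasurableSet s)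
    (f : Ω → ℝ) (hf : f = s.indicator (fun _ => (1:ℝ))) : Integrable f P := by
  rw [hf]; exact (integrable_const (1:ℝ)).indicator hs

/-- Covariance of `1_{X > q}` with `α·1_{X ≤ ν} − c·1_{ν−ξ < X ≤ ν+ξ}`. -/
theorem stmt14
    (P : Measure Ω) [IsProbabilityMeasure P]
    (X : Ω → ℝ) (hX : Measurable X)
    (p : ℝ) (hp : p ∈ Set.Ioo (0:ℝ) 1)
    (q : ℝ) (hq : q = quantile' P X p) (hFq : cdf' P X q = p)
    (ν ξ : ℝ) (hξ : 0 ≤ ξ)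
    (hmed : cdf' P X ν = 1/2)
    (hmad : cdf' P X (ν + ξ) - cdf' P X (ν - ξ) = 1/2)
    (α c : ℝ) :
    cov' P (fun ω => if q < X ω then (1:ℝ) else 0)
        (fun ω => α * (if X ω ≤ ν then (1:ℝ) else 0)
          - c * (if ν - ξ < X ω ∧ X ω ≤ ν + ξ then (1:ℝ) else 0))
      = α * max (-(p / 2)) ((p - 1) / 2)
        - c * (max 0 (cdf' P X (ν + ξ) - max (cdf' P X (ν - ξ)) p) - (1 - p) / 2) := by
  classical
  -- measurability of the relevant sets
  have hAm : MeasurableSet {ω | q < X ω} := measurableSet_lt measurable_const hX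
  have hBm : MeasurableSet {ω | X ω ≤ ν} := measurableSet_le hX measurable_const
  have hCm : MeasurableSet {ω | ν - ξ < X ω ∧ X ω ≤ ν + ξ} := by
    rw [Set.setOf_and]
    exact (measurableSet_lt measurable_const hX).inter (measurableSet_le hX measurable_const)
  have hABm : MeasurableSet {ω | q < X ω ∧ X ω ≤ ν} := by
    rw [Set.setOf_and]
    exact (measurableSet_lt measurable_const hX).inter (measurableSet_le hX measurable_const)
  have hACm : MeasurableSet {ω | q < X ω ∧ (ν - ξ < X ω ∧ X ω ≤ ν + ξ)} := by
    rw [Set.setOf_and]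
    exact (measurableSet_lt measurable_const hX).inter hCm
  -- measures of the relevant sets
  have hPA : (P {ω | q < X ω}).toReal = 1 - p := by
    have hc : {ω | q < X ω} = {ω | X ω ≤ q}ᶜ := by ext ω; simp [not_le]
    rw [hc, measure_compl (measurableSet_le hX measurable_const) (measure_ne_top _ _),
      measure_univ, ENNReal.toReal_sub_of_le prob_le_one ENNReal.one_ne_top, ENNReal.toReal_one]
    have : (P {ω | X ω ≤ q}).toReal = p := hFq
    rw [this]
  have hPB : (P {ω | X ω ≤ ν}).toReal = 1/2 := hmed
  have hPC : (P {ω | ν - ξ < X ω ∧ X ω ≤ ν + ξ}).toReal = 1/2 := by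
    rw [meas_Ioc' P X hX]
    rw [show cdf' P X (ν + ξ) - cdf' P X (ν - ξ) = 1/2 from hmad]
    norm_num
  have hPAB : (P {ω | q < X ω ∧ X ω ≤ ν}).toReal = max 0 (1/2 - p) := by
    rw [meas_Ioc' P X hX, hmed, hFq]
  have hACset : {ω | q < X ω ∧ (ν - ξ < X ω ∧ X ω ≤ ν + ξ)}
      = {ω | max q (ν - ξ) < X ω ∧ X ω ≤ ν + ξ} := by
    ext ω; simp only [Set.mem_setOf_eq, max_lt_iff]; tauto
  have hcdfmax : cdf' P X (max q (ν - ξ)) = max (cdf' P X (ν - ξ)) p := by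
    rcases le_total q (ν - ξ) with h | h
    · rw [max_eq_right h, max_eq_left]
      rw [← hFq]; exact cdf_mono' P X h
    · rw [max_eq_left h, ← hFq, max_eq_right (cdf_mono' P X h)]
  have hPAC : (P {ω | q < X ω ∧ (ν - ξ < X ω ∧ X ω ≤ ν + ξ)}).toReal
      = max 0 (cdf' P X (ν + ξ) - max (cdf' P X (ν - ξ)) p) := by
    rw [hACset, meas_Ioc' P X hX, hcdfmax]
  -- integrals of indicators
  have hfA : (fun ω => if q < X ω then (1:ℝ) else 0)
      = Set.indicator {ω | q < X ω} (fun _ => (1:ℝ)) := by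
    funext ω; by_cases h : q < X ω <;> simp [Set.indicator_apply, h]
  have hfB : (fun ω => if X ω ≤ ν then (1:ℝ) else 0)
      = Set.indicator {ω | X ω ≤ ν} (fun _ => (1:ℝ)) := by
    funext ω; by_cases h : X ω ≤ ν <;> simp [Set.indicator_apply, h]
  have hfC : (fun ω => if ν - ξ < X ω ∧ X ω ≤ ν + ξ then (1:ℝ) else 0)
      = Set.indicator {ω | ν - ξ < X ω ∧ X ω ≤ ν + ξ} (fun _ => (1:ℝ)) := by
    funext ω; by_cases h : ν - ξ < X ω ∧ X ω ≤ ν + ξ <;> simp [Set.indicator_apply, h]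
  have hfAB : (fun ω => if q < X ω ∧ X ω ≤ ν then (1:ℝ) else 0)
      = Set.indicator {ω | q < X ω ∧ X ω ≤ ν} (fun _ => (1:ℝ)) := by
    funext ω; by_cases h : q < X ω ∧ X ω ≤ ν <;> simp [Set.indicator_apply, h]
  have hfAC : (fun ω => if q < X ω ∧ (ν - ξ < X ω ∧ X ω ≤ ν + ξ) then (1:ℝ) else 0)
      = Set.indicator {ω | q < X ω ∧ (ν - ξ < X ω ∧ X ω ≤ ν + ξ)} (fun _ => (1:ℝ)) := by
    funext ω
    by_cases h : q < X ω ∧ (ν - ξ < X ω ∧ X ω ≤ ν + ξ) <;> simp [Set.indicator_apply, h]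
  have iA := integrable_ite' P hAm _ hfA
  have iB := integrable_ite' P hBm _ hfB
  have iC := integrable_ite' P hCm _ hfC
  have iAB := integrable_ite' P hABm _ hfAB
  have iAC := integrable_ite' P hACm _ hfAC
  have hIA : ∫ ω, (if q < X ω then (1:ℝ) else 0) ∂P = 1 - p := by
    rw [integral_ite' P hAm _ hfA, hPA]
  have hIB : ∫ ω, (if X ω ≤ ν then (1:ℝ) else 0) ∂P = 1/2 := by
    rw [integral_ite' P hBm _ hfB, hPB]
  have hIC : ∫ ω, (if ν - ξ < X ω ∧ X ω ≤ ν + ξ then (1:ℝ) else 0) ∂P = 1/2 := by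
    rw [integral_ite' P hCm _ hfC, hPC]
  have hIAB : ∫ ω, (if q < X ω ∧ X ω ≤ ν then (1:ℝ) else 0) ∂P = max 0 (1/2 - p) := by
    rw [integral_ite' P hABm _ hfAB, hPAB]
  have hIAC : ∫ ω, (if q < X ω ∧ (ν - ξ < X ω ∧ X ω ≤ ν + ξ) then (1:ℝ) else 0) ∂P
      = max 0 (cdf' P X (ν + ξ) - max (cdf' P X (ν - ξ)) p) := by
    rw [integral_ite' P hACm _ hfAC, hPAC]
  -- expectations
  have hEZ : expec P (fun ω => if q < X ω then (1:ℝ) else 0) = 1 - p := hIA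
  have hEW : expec P (fun ω => α * (if X ω ≤ ν then (1:ℝ) else 0)
      - c * (if ν - ξ < X ω ∧ X ω ≤ ν + ξ then (1:ℝ) else 0)) = α * (1/2) - c * (1/2) := by
    unfold expec
    rw [integral_sub (iB.const_mul α) (iC.const_mul c), integral_const_mul, integral_const_mul,
      hIB, hIC]
  -- pointwise expansion
  have hpt : ∀ ω, ((if q < X ω then (1:ℝ) else 0) - (1 - p))
      * ((α * (if X ω ≤ ν then (1:ℝ) else 0)
          - c * (if ν - ξ < X ω ∧ X ω ≤ ν + ξ then (1:ℝ) else 0)) - (α * (1/2) - c * (1/2)))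
      = α * (if q < X ω ∧ X ω ≤ ν then (1:ℝ) else 0)
        - c * (if q < X ω ∧ (ν - ξ < X ω ∧ X ω ≤ ν + ξ) then (1:ℝ) else 0)
        - (α * (1/2) - c * (1/2)) * (if q < X ω then (1:ℝ) else 0)
        - (1 - p) * (α * (if X ω ≤ ν then (1:ℝ) else 0))
        + (1 - p) * (c * (if ν - ξ < X ω ∧ X ω ≤ ν + ξ then (1:ℝ) else 0))
        + (1 - p) * (α * (1/2) - c * (1/2)) := by
    intro ω
    by_cases h1 : q < X ω <;> by_cases h2 : X ω ≤ ν <;>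
      by_cases h3 : ν - ξ < X ω ∧ X ω ≤ ν + ξ <;> simp [h1, h2, h3] <;> ring
  unfold cov'
  rw [hEZ, hEW]
  simp only [hpt]
  have i1 : Integrable (fun ω => α * (if q < X ω ∧ X ω ≤ ν then (1:ℝ) else 0)) P :=
    iAB.const_mul α
  have i2 : Integrable
      (fun ω => c * (if q < X ω ∧ (ν - ξ < X ω ∧ X ω ≤ ν + ξ) then (1:ℝ) else 0)) P :=
    iAC.const_mul c
  have i3 : Integrable
      (fun ω => (α * (1/2) - c * (1/2)) * (if q < X ω then (1:ℝ) else 0)) P :=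
    iA.const_mul _
  have i4 : Integrable (fun ω => (1 - p) * (α * (if X ω ≤ ν then (1:ℝ) else 0))) P :=
    (iB.const_mul α).const_mul (1 - p)
  have i5 : Integrable
      (fun ω => (1 - p) * (c * (if ν - ξ < X ω ∧ X ω ≤ ν + ξ then (1:ℝ) else 0))) P :=
    (iC.const_mul c).const_mul (1 - p)
  have i6 : Integrable (fun _ : Ω => (1 - p) * (α * (1/2) - c * (1/2))) P := integrable_const _
  have i12 : Integrable (fun ω => α * (if q < X ω ∧ X ω ≤ ν then (1:ℝ) else 0)
      - c * (if q < X ω ∧ (ν - ξ < X ω ∧ X ω ≤ ν + ξ) then (1:ℝ) else 0)) P := i1.sub i2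
  have i13 : Integrable (fun ω => (α * (if q < X ω ∧ X ω ≤ ν then (1:ℝ) else 0)
      - c * (if q < X ω ∧ (ν - ξ < X ω ∧ X ω ≤ ν + ξ) then (1:ℝ) else 0))
      - (α * (1/2) - c * (1/2)) * (if q < X ω then (1:ℝ) else 0)) P := i12.sub i3
  have i14 : Integrable (fun ω => ((α * (if q < X ω ∧ X ω ≤ ν then (1:ℝ) else 0)
      - c * (if q < X ω ∧ (ν - ξ < X ω ∧ X ω ≤ ν + ξ) then (1:ℝ) else 0))
      - (α * (1/2) - c * (1/2)) * (if q < X ω then (1:ℝ) else 0))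
      - (1 - p) * (α * (if X ω ≤ ν then (1:ℝ) else 0))) P := i13.sub i4
  have i15 : Integrable (fun ω => (((α * (if q < X ω ∧ X ω ≤ ν then (1:ℝ) else 0)
      - c * (if q < X ω ∧ (ν - ξ < X ω ∧ X ω ≤ ν + ξ) then (1:ℝ) else 0))
      - (α * (1/2) - c * (1/2)) * (if q < X ω then (1:ℝ) else 0))
      - (1 - p) * (α * (if X ω ≤ ν then (1:ℝ) else 0)))
      + (1 - p) * (c * (if ν - ξ < X ω ∧ X ω ≤ ν + ξ then (1:ℝ) else 0))) P := i14.add i5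
  rw [integral_add i15 i6, integral_add i14 i5, integral_sub i13 i4, integral_sub i12 i3,
    integral_sub i1 i2]
  simp only [integral_const_mul, integral_const, measure_univ, probReal_univ, ENNReal.toReal_one, smul_eq_mul,
    one_mul, hIA, hIB, hIC, hIAB, hIAC]
  rcases le_total p (1/2) with h | h
  · rw [max_eq_right (by linarith : (0:ℝ) ≤ 1/2 - p),
      max_eq_left (by linarith : (p - 1)/2 ≤ -(p/2))]
    ring
  · rw [max_eq_left (by linarith : (1:ℝ)/2 - p ≤ 0),
      max_eq_right (by linarith : -(p/2) ≤ (p - 1)/2)]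
    ring
end
end

section
/- Let X be a real random variable with mean μ, variance σ² > 0 and cdf F_X, set Y = (X−μ)/σ with cdf F_Y, and let r ∈ {1,2} with E[|X|^{r+1}] < ∞. Then Cov( X, |X−μ|^r + (2−r)(2F_X(μ)−1)(X−μ) ) = σ^{r+1}·( E[Y^{r+1}] + (2−r)·( 2F_Y(0) − 1 − 2·E[Y^{r+1}·1_{Y<0}] ) ). -/
open MeasureTheory ProbabilityTheory Filter Topology

noncomputable section

variable {Ω : Type*} [MeasurableSpace Ω]

open scoped ENNReal
lemma aux_memℒp {P : Measure Ω} {f : Ω → ℝ} (hf : AEStronglyMeasurable f P) {n : ℕ} (hn : n ≠ 0)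
    (h : Integrable (fun ω => |f ω| ^ n) P) : MemLp f n P := by
  have hq0 : ((n : ℝ≥0∞)) ≠ 0 := by exact_mod_cast hn
  have hqt : ((n : ℝ≥0∞)) ≠ ∞ := ENNReal.natCast_ne_top n
  have heq : (fun ω => ‖f ω‖ ^ ((n : ℝ≥0∞)).toReal) = fun ω => |f ω| ^ n := by
    funext ω
    rw [ENNReal.toReal_natCast, Real.norm_eq_abs, Real.rpow_natCast]
  have h1 : MemLp (fun ω => ‖f ω‖ ^ ((n : ℝ≥0∞)).toReal) ((n : ℝ≥0∞) / n) P := by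
    rw [ENNReal.div_self hq0 hqt, memLp_one_iff_integrable, heq]
    exact h
  exact (memLp_norm_rpow_iff hf hq0 hqt).1 h1

lemma aux_int {P : Measure Ω} [IsFiniteMeasure P] {f : Ω → ℝ} {n m : ℕ} (hm : m ≠ 0)
    (hmn : m ≤ n) (h : MemLp f n P) : Integrable (fun ω => |f ω| ^ m) P := by
  have hq0 : ((m : ℝ≥0∞)) ≠ 0 := by exact_mod_cast hm
  have hqt : ((m : ℝ≥0∞)) ≠ ∞ := ENNReal.natCast_ne_top m
  have h2 : MemLp f m P := h.mono_exponent (by exact_mod_cast hmn)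
  have := h2.integrable_norm_rpow hq0 hqt
  have heq : (fun ω => ‖f ω‖ ^ ((m : ℝ≥0∞)).toReal) = fun ω => |f ω| ^ m := by
    funext ω
    rw [ENNReal.toReal_natCast, Real.norm_eq_abs, Real.rpow_natCast]
  rwa [heq] at this


/-- Covariance of `X` with `|X−μ|^r + (2−r)(2F_X(μ)−1)(X−μ)` in standardized form. -/
theorem stmt15
    (P : Measure Ω) [IsProbabilityMeasure P]
    (X : Ω → ℝ) (hX : Measurable X)
    (μ σ : ℝ) (hσpos : 0 < σ)
    (hint : Integrable X P) (hmean : expec P X = μ) (hvar : variance X P = σ ^ 2)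
    (Y : Ω → ℝ) (hY : ∀ ω, Y ω = (X ω - μ) / σ)
    (r : ℕ) (hr : r = 1 ∨ r = 2)
    (hmom : Integrable (fun ω => |X ω| ^ (r + 1)) P) :
    cov' P X (fun ω => |X ω - μ| ^ r
        + (2 - (r : ℝ)) * (2 * cdf' P X μ - 1) * (X ω - μ))
      = σ ^ (r + 1) * (expec P (fun ω => Y ω ^ (r + 1))
        + (2 - (r : ℝ)) * (2 * cdf' P Y 0 - 1
          - 2 * ∫ ω in {ω | Y ω < 0}, Y ω ^ (r + 1) ∂P)) := by
  have hq : 2 ≤ r + 1 := by rcases hr with h | h <;> omega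
  have hXm : MemLp X (r + 1 : ℕ) P := aux_memℒp hX.aestronglyMeasurable (by omega) hmom
  have hm_meas : Measurable fun ω => X ω - μ := hX.sub measurable_const
  have hXmu : MemLp (fun ω => X ω - μ) (r + 1 : ℕ) P := hXm.sub (memLp_const μ)
  have hint_m : Integrable (fun ω => X ω - μ) P := hint.sub (integrable_const μ)
  have hmean' : ∫ ω, X ω ∂P = μ := hmean
  have hEm : ∫ ω, (X ω - μ) ∂P = 0 := by
    rw [integral_sub hint (integrable_const μ), integral_const, probReal_univ,
      one_smul, hmean', sub_self]
  have habs2 : Integrable (fun ω => |X ω - μ| ^ 2) P := aux_int two_ne_zero hq hXmu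
  have hI2 : Integrable (fun ω => (X ω - μ) ^ 2) P := by simpa [sq_abs] using habs2
  have hEm2 : ∫ ω, (X ω - μ) ^ 2 ∂P = σ ^ 2 := by
    have h2 : MemLp X 2 P := hXm.mono_exponent (by exact_mod_cast hq)
    have hv := variance_eq_integral h2.aestronglyMeasurable.aemeasurable
    rw [hvar] at hv
    refine (integral_congr_ae (ae_of_all _ fun ω => ?_)).trans hv.symm
    simp [Pi.pow_apply, Pi.sub_apply, hmean']
  have hsetle : {ω | Y ω ≤ 0} = {ω | X ω ≤ μ} := by
    ext ω
    simp only [Set.mem_setOf_eq, hY]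
    rw [div_le_iff₀ hσpos, zero_mul, sub_nonpos]
  have hcdf : cdf' P Y 0 = cdf' P X μ := by unfold cdf'; rw [hsetle]
  have hsetY : {ω | Y ω < 0} = {ω | X ω < μ} := by
    ext ω
    simp only [Set.mem_setOf_eq, hY]
    rw [div_lt_iff₀ hσpos, zero_mul, sub_neg]
  have hsmeas : MeasurableSet {ω | X ω < μ} := measurableSet_lt hX measurable_const
  have hσne : σ ≠ 0 := hσpos.ne'
  rcases hr with rfl | rfl
  · simp only [cov', expec, hmean', pow_one, Nat.cast_one, hcdf, hsetY]
    have hIm : Integrable (fun ω => (X ω - μ) * |X ω - μ|) P := by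
      refine hI2.mono' (hm_meas.mul hm_meas.abs).aestronglyMeasurable (ae_of_all _ fun ω => ?_)
      rw [Real.norm_eq_abs, abs_mul, abs_abs, ← sq_abs, sq]
    have hdecomp : ∀ ω, (X ω - μ) * |X ω - μ| =
        (X ω - μ) ^ 2 - 2 * Set.indicator {ω | X ω < μ} (fun ω => (X ω - μ) ^ 2) ω := by
      intro ω
      by_cases h : X ω < μ
      · have hmem : ω ∈ {ω | X ω < μ} := h
        rw [Set.indicator_of_mem hmem, abs_of_neg (by linarith)]; ring
      · have hmem : ω ∉ {ω | X ω < μ} := h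
        rw [Set.indicator_of_notMem hmem, abs_of_nonneg (by push_neg at h; linarith)]; ring
    have hIind : Integrable (fun ω => Set.indicator {ω | X ω < μ} (fun ω => (X ω - μ) ^ 2) ω) P :=
      hI2.indicator hsmeas
    set F := cdf' P X μ with hF
    set EW := ∫ ω, |X ω - μ| + (2 - 1) * (2 * F - 1) * (X ω - μ) ∂P with hEW
    have hfun : (fun ω => (X ω - μ) * (|X ω - μ| + (2 - 1) * (2 * F - 1) * (X ω - μ) - EW))
        = fun ω => (2 * F * (X ω - μ) ^ 2
            - 2 * Set.indicator {ω | X ω < μ} (fun ω => (X ω - μ) ^ 2) ω) - EW * (X ω - μ) := by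
      funext ω
      have h := hdecomp ω
      calc (X ω - μ) * (|X ω - μ| + (2 - 1) * (2 * F - 1) * (X ω - μ) - EW)
          = (X ω - μ) * |X ω - μ| + (2 - 1) * (2 * F - 1) * (X ω - μ) ^ 2
            - EW * (X ω - μ) := by ring
        _ = _ := by rw [h]; ring
    have hIA1 : Integrable (fun ω => 2 * F * (X ω - μ) ^ 2) P := hI2.const_mul _
    have hIA2 : Integrable
        (fun ω => 2 * Set.indicator {ω | X ω < μ} (fun ω => (X ω - μ) ^ 2) ω) P :=
      hIind.const_mul 2
    have hIC : Integrable (fun ω => EW * (X ω - μ)) P := hint_m.const_mul EW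
    have hIA : Integrable (fun ω => 2 * F * (X ω - μ) ^ 2
        - 2 * Set.indicator {ω | X ω < μ} (fun ω => (X ω - μ) ^ 2) ω) P := hIA1.sub hIA2
    rw [hfun, integral_sub hIA hIC, integral_sub hIA1 hIA2,
      integral_const_mul, integral_const_mul, integral_const_mul, hEm2, hEm,
      integral_indicator hsmeas, mul_zero, sub_zero]
    simp only [hY, div_pow, show (1 : ℕ) + 1 = 2 from rfl]
    rw [integral_div, integral_div, hEm2]
    have J := ∫ ω in {ω | X ω < μ}, (X ω - μ) ^ 2 ∂P
    field_simp
    ring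
  · have h20 : (2 : ℝ) - ((2 : ℕ) : ℝ) = 0 := by norm_num
    simp only [cov', expec, hmean', h20, zero_mul, add_zero, sq_abs, hEm2]
    have habs3 : Integrable (fun ω => |X ω - μ| ^ 3) P :=
      aux_int (by norm_num) (by norm_num) hXmu
    have hI3 : Integrable (fun ω => (X ω - μ) ^ 3) P := by
      refine habs3.mono' (hm_meas.pow_const 3).aestronglyMeasurable
        (ae_of_all _ fun ω => ?_)
      rw [Real.norm_eq_abs, abs_pow]
    have hfun : (fun ω => (X ω - μ) * ((X ω - μ) ^ 2 - σ ^ 2))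
        = fun ω => (X ω - μ) ^ 3 - σ ^ 2 * (X ω - μ) := by
      funext ω; ring
    rw [hfun, integral_sub hI3 (hint_m.const_mul _), integral_const_mul, hEm,
      mul_zero, sub_zero]
    simp only [hY, div_pow, show (2 : ℕ) + 1 = 3 from rfl]
    rw [integral_div]
    field_simp
end
end

section
/- Let g : (0,1) → ℝ be differentiable, let μ ∈ ℝ, let r ≥ 1 be an integer and p ∈ (0,1). Assume t ↦ |g(t)−μ|^r is integrable on (0,1), that t ↦ r·|g(t)−μ|^{r−1}·sgn(g(t)−μ)·g'(t)·(min(p,t) − p·t) is integrable on (0,1), and that the boundary terms vanish: t·|g(t)−μ|^r → 0 as t → 0⁺ and (1−t)·|g(t)−μ|^r → 0 as t → 1⁻. Then ∫₀¹ r·|g(t)−μ|^{r−1}·sgn(g(t)−μ)·g'(t)·(min(p,t) − p·t) dt = p·∫_p¹ |g(t)−μ|^r dt − (1−p)·∫₀^p |g(t)−μ|^r dt. -/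
open MeasureTheory ProbabilityTheory Filter Topology

noncomputable section

variable {Ω : Type*} [MeasurableSpace Ω]

/-- The set of zeros of `g - μ` with nonvanishing derivative is countable. -/
lemma stmt18_countable (g g' : ℝ → ℝ) (μ : ℝ)
    (hg : ∀ t ∈ Set.Ioo (0:ℝ) 1, HasDerivAt g (g' t) t) :
    Set.Countable {t | t ∈ Set.Ioo (0:ℝ) 1 ∧ g t = μ ∧ g' t ≠ 0} := by
  set S := {t | t ∈ Set.Ioo (0:ℝ) 1 ∧ g t = μ ∧ g' t ≠ 0} with hS
  have hf : ∀ x ∈ S, ({x} : Set ℝ) ∈ 𝓝[S] x := by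
    intro x hx
    obtain ⟨hx1, hx2, hx3⟩ := hx
    have hslope : Tendsto (slope g x) (𝓝[≠] x) (𝓝 (g' x)):=
      hasDerivAt_iff_tendsto_slope.1 (hg x hx1)
    have h1 : ∀ᶠ s in 𝓝[≠] x, slope g x s ≠ 0 :=
      hslope (compl_singleton_mem_nhds hx3)
    have h2 : ∀ᶠ s in 𝓝[≠] x, g s ≠ μ := by
      filter_upwards [h1, self_mem_nhdsWithin] with s hs hsx
      intro hgs
      apply hs
      simp [slope, hgs, hx2, Set.mem_compl_iff] at *
    rw [eventually_nhdsWithin_iff] at h2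
    have h3 : ∀ᶠ s in 𝓝[S] x, s ∈ ({x} : Set ℝ) := by
      have h2' : ∀ᶠ s in 𝓝[S] x, s ∈ ({x}ᶜ : Set ℝ) → g s ≠ μ :=
        eventually_nhdsWithin_of_eventually_nhds h2
      filter_upwards [h2', self_mem_nhdsWithin] with s hs hsS
      by_contra hne
      exact hs hne hsS.2.1
    exact h3
  obtain ⟨t, hts, htc, hcov⟩ := TopologicalSpace.countable_cover_nhdsWithin hf
  refine Set.Countable.mono (fun x hx => ?_) htc
  have := hcov hx
  simpa using this

/-- One-sided differentiability of `|g - μ| ^ r` from the right. -/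
lemma stmt18_deriv (g g' : ℝ → ℝ) (μ : ℝ) (r : ℕ) (hr : 1 ≤ r) {t : ℝ}
    (hg : HasDerivAt g (g' t) t) :
    HasDerivWithinAt (fun s => |g s - μ| ^ r)
      (if g t = μ then |g' t| * (if r = 1 then 1 else 0)
       else (r : ℝ) * |g t - μ| ^ (r - 1) * Real.sign (g t - μ) * g' t) (Set.Ioi t) t := by
  by_cases h : g t = μ
  · rw [if_pos h, hasDerivWithinAt_iff_tendsto_slope]
    have hsub : Set.Ioi t \ {t} ⊆ ({t}ᶜ : Set ℝ) := fun s hs => hs.2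
    have hg_slope : Tendsto (slope g t) (𝓝[Set.Ioi t \ {t}] t) (𝓝 (g' t)) :=
      (hasDerivAt_iff_tendsto_slope.1 hg).mono_left (nhdsWithin_mono _ hsub)
    have habs : Tendsto (fun s => |slope g t s|) (𝓝[Set.Ioi t \ {t}] t) (𝓝 |g' t|) :=
      hg_slope.abs
    have hcont : Tendsto (fun s => |g s - μ| ^ (r - 1)) (𝓝[Set.Ioi t \ {t}] t)
        (𝓝 (|g t - μ| ^ (r - 1))) :=
      (((hg.continuousAt.sub continuousAt_const).abs.pow (r - 1)).tendsto).mono_left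
        nhdsWithin_le_nhds
    have hmul := habs.mul hcont
    have hval : |g' t| * |g t - μ| ^ (r - 1) = |g' t| * (if r = 1 then 1 else 0) := by
      rcases eq_or_lt_of_le hr with h1 | h1
      · simp [← h1, h]
      · have hr1 : r - 1 ≠ 0 := by omega
        have hr1' : ¬ r = 1 := by omega
        simp [h, hr1, hr1', zero_pow]
    rw [hval] at hmul
    refine hmul.congr' ?_
    filter_upwards [self_mem_nhdsWithin] with s hs
    have hst : (0:ℝ) < s - t := sub_pos.2 hs.1
    have hslope_g : |slope g t s| = |g s - μ| / (s - t) := by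
      rw [slope_def_field, h]
      rw [abs_div, abs_of_pos hst]
    rw [hslope_g, slope_def_field]
    have hφt : |g t - μ| ^ r = 0 := by
      rw [h]; simp [zero_pow (by omega : r ≠ 0)]
    rw [hφt]
    have : |g s - μ| ^ r = |g s - μ| ^ (r - 1) * |g s - μ| := by
      rw [← pow_succ]
      congr 1
      omega
    rw [this]
    field_simp
    ring
  · have hd : (if g t = μ then |g' t| * (if r = 1 then 1 else 0)
        else (r : ℝ) * |g t - μ| ^ (r - 1) * Real.sign (g t - μ) * g' t)
        = (r : ℝ) * |g t - μ| ^ (r - 1) * Real.sign (g t - μ) * g' t := if_neg h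
    rw [hd]
    rcases lt_or_gt_of_ne (sub_ne_zero.2 h) with hlt | hgt
    · -- g t < μ
      have hlt' : g t < μ := by linarith [sub_neg.1 hlt]
      have hev : ∀ᶠ s in 𝓝 t, g s < μ := hg.continuousAt (Iio_mem_nhds hlt')
      have hD : HasDerivAt (fun s => (μ - g s) ^ r)
          ((r : ℝ) * (μ - g t) ^ (r - 1) * (0 - g' t)) t :=
        ((hasDerivAt_const t μ).sub hg).pow r
      have heq : (fun s => |g s - μ| ^ r) =ᶠ[𝓝 t] (fun s => (μ - g s) ^ r) := by
        filter_upwards [hev] with s hs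
        rw [abs_of_neg (by linarith : g s - μ < 0)]
        ring_nf
      have := hD.congr_of_eventuallyEq heq
      refine this.hasDerivWithinAt.congr_deriv ?_
      rw [abs_of_neg (by linarith : g t - μ < 0), Real.sign_of_neg (by linarith : g t - μ < 0)]
      ring_nf
    · -- μ < g t
      have hgt' : μ < g t := by linarith [sub_pos.1 hgt]
      have hev : ∀ᶠ s in 𝓝 t, μ < g s := hg.continuousAt (Ioi_mem_nhds hgt')
      have hD : HasDerivAt (fun s => (g s - μ) ^ r)
          ((r : ℝ) * (g t - μ) ^ (r - 1) * g' t) t :=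
        (hg.sub_const μ).pow r
      have heq : (fun s => |g s - μ| ^ r) =ᶠ[𝓝 t] (fun s => (g s - μ) ^ r) := by
        filter_upwards [hev] with s hs
        rw [abs_of_pos (by linarith : 0 < g s - μ)]
      have := hD.congr_of_eventuallyEq heq
      refine this.hasDerivWithinAt.congr_deriv ?_
      rw [abs_of_pos (by linarith : 0 < g t - μ), Real.sign_of_pos (by linarith : 0 < g t - μ)]
      ring

/-- FTC-2 with right derivatives on the open interval and limits at the endpoints. -/
lemma stmt18_ftc {a b : ℝ} (hab : a < b) {f f' : ℝ → ℝ} {fa fb : ℝ}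
    (hcont : ContinuousOn f (Set.Ioo a b))
    (hderiv : ∀ x ∈ Set.Ioo a b, HasDerivWithinAt f (f' x) (Set.Ioi x) x)
    (hint : IntervalIntegrable f' volume a b)
    (ha : Tendsto f (𝓝[>] a) (𝓝 fa)) (hb : Tendsto f (𝓝[<] b) (𝓝 fb)) :
    ∫ y in a..b, f' y = fb - fa := by
  set F : ℝ → ℝ := Function.update (Function.update f a fa) b fb with hF
  have hFf : ∀ x ∈ Set.Ioo a b, F x = f x := fun x hx => by
    rw [hF, Function.update_of_ne hx.2.ne, Function.update_of_ne hx.1.ne']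
  have Fderiv : ∀ x ∈ Set.Ioo a b, HasDerivWithinAt F (f' x) (Set.Ioi x) x := by
    intro x hx
    refine (hderiv x hx).congr_of_eventuallyEq ?_ (hFf x hx)
    filter_upwards [mem_nhdsWithin_of_mem_nhds (Ioo_mem_nhds hx.1 hx.2)] with y hy
    exact hFf y hy
  have hcontF : ContinuousOn F (Set.Icc a b) := by
    rw [hF, continuousOn_update_iff, continuousOn_update_iff, Set.Icc_sdiff_right,
      Set.Ico_diff_left]
    refine ⟨⟨hcont, ?_⟩, ?_⟩
    · exact fun _ => ha.mono_left (nhdsWithin_mono _ Set.Ioo_subset_Ioi_self)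
    · rintro -
      refine (hb.congr' ?_).mono_left (nhdsWithin_mono _ Set.Ico_subset_Iio_self)
      filter_upwards [Ioo_mem_nhdsLT_of_mem (Set.right_mem_Ioc.2 hab)] with z hz using
        (Function.update_of_ne hz.1.ne' _ _).symm
  have := intervalIntegral.integral_eq_sub_of_hasDeriv_right_of_le hab.le hcontF Fderiv hint
  simpa [hF, hab.ne, hab.ne', Function.update_self,
    Function.update_of_ne hab.ne] using this

/-- The integration-by-parts identity for the Brownian-bridge covariance kernel used in
the Taylor-expansion proof of Theorem 2.1. -/
theorem stmt18
    (g g' : ℝ → ℝ) (hg : ∀ t ∈ Set.Ioo (0:ℝ) 1, HasDerivAt g (g' t) t)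
    (μ : ℝ) (r : ℕ) (hr : 1 ≤ r) (p : ℝ) (hp : p ∈ Set.Ioo (0:ℝ) 1)
    (hint1 : IntegrableOn (fun t => |g t - μ| ^ r) (Set.Ioo (0:ℝ) 1))
    (hint2 : IntegrableOn
      (fun t => (r : ℝ) * |g t - μ| ^ (r - 1) * Real.sign (g t - μ) * g' t
        * (min p t - p * t)) (Set.Ioo (0:ℝ) 1))
    (hb0 : Filter.Tendsto (fun t => t * |g t - μ| ^ r) (nhdsWithin 0 (Set.Ioi 0)) (𝓝 0))
    (hb1 : Filter.Tendsto (fun t => (1 - t) * |g t - μ| ^ r)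
      (nhdsWithin 1 (Set.Iio 1)) (𝓝 0)) :
    ∫ t in Set.Ioo (0:ℝ) 1,
        (r : ℝ) * |g t - μ| ^ (r - 1) * Real.sign (g t - μ) * g' t * (min p t - p * t)
      = p * (∫ t in Set.Ioo p 1, |g t - μ| ^ r)
        - (1 - p) * ∫ t in Set.Ioo (0:ℝ) p, |g t - μ| ^ r := by
  obtain ⟨hp0, hp1⟩ := hp
  set φ : ℝ → ℝ := fun t => |g t - μ| ^ r with hφ
  set D : ℝ → ℝ := fun t => (r : ℝ) * |g t - μ| ^ (r - 1) * Real.sign (g t - μ) * g' t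
    with hD
  set D' : ℝ → ℝ := fun t => if g t = μ then |g' t| * (if r = 1 then 1 else 0) else D t
    with hD'
  have hsub1 : Set.Ioo (0:ℝ) p ⊆ Set.Ioo (0:ℝ) 1 :=
    Set.Ioo_subset_Ioo le_rfl hp1.le
  have hsub2 : Set.Ioo p 1 ⊆ Set.Ioo (0:ℝ) 1 :=
    Set.Ioo_subset_Ioo hp0.le le_rfl
  have hφca : ∀ t ∈ Set.Ioo (0:ℝ) 1, ContinuousAt φ t := fun t ht =>
    (((hg t ht).continuousAt.sub continuousAt_const).abs.pow r)
  have hφc : ContinuousOn φ (Set.Ioo (0:ℝ) 1) :=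
    fun t ht => (hφca t ht).continuousWithinAt
  -- the exceptional set is null
  have hSae : ∀ᵐ t ∂(volume : Measure ℝ),
      t ∉ {t | t ∈ Set.Ioo (0:ℝ) 1 ∧ g t = μ ∧ g' t ≠ 0} :=
    measure_eq_zero_iff_ae_notMem.1 ((stmt18_countable g g' μ hg).measure_zero _)
  have hDD' : ∀ t, t ∉ {t | t ∈ Set.Ioo (0:ℝ) 1 ∧ g t = μ ∧ g' t ≠ 0} →
      t ∈ Set.Ioo (0:ℝ) 1 → D' t = D t := by
    intro t htS ht
    by_cases hgt : g t = μ
    · have hg0 : g' t = 0 ∨ ¬ r = 1 := by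
        by_cases h1 : r = 1
        · left; by_contra h2; exact htS ⟨ht, hgt, h2⟩
        · right; exact h1
      rcases hg0 with h2 | h2
      · simp [hD', hD, hgt, h2]
      · simp [hD', hD, hgt, h2, Real.sign_zero]
    · simp [hD', hgt]
  -- interval integrability of the main integrand on the pieces
  have hDw1 : IntervalIntegrable (fun t => D t * (min p t - p * t)) volume 0 p := by
    rw [intervalIntegrable_iff_integrableOn_Ioo_of_le hp0.le]
    exact (hint2.mono_set hsub1)
  have hDw2 : IntervalIntegrable (fun t => D t * (min p t - p * t)) volume p 1 := by
    rw [intervalIntegrable_iff_integrableOn_Ioo_of_le hp1.le]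
    exact (hint2.mono_set hsub2)
  -- FTC on (0, p)
  have hI₁ : ∫ y in (0:ℝ)..p, (D' y * ((1 - p) * y) + φ y * (1 - p))
      = φ p * ((1 - p) * p) - 0 := by
    refine stmt18_ftc (f := fun t => φ t * ((1 - p) * t)) hp0 ?_ ?_ ?_ ?_ ?_
    · exact (hφc.mono hsub1).mul (continuous_const.mul continuous_id).continuousOn
    · intro x hx
      have h1 := stmt18_deriv g g' μ r hr (hg x (hsub1 hx))
      have h2 : HasDerivAt (fun y : ℝ => (1 - p) * y) (1 - p) x := by
        simpa using (hasDerivAt_id x).const_mul (1 - p)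
      exact h1.mul h2.hasDerivWithinAt
    · rw [intervalIntegrable_iff_integrableOn_Ioo_of_le hp0.le]
      have hA : IntegrableOn (fun t => D t * (min p t - p * t)) (Set.Ioo (0:ℝ) p) :=
        hint2.mono_set hsub1
      have hB : IntegrableOn (fun t => φ t * (1 - p)) (Set.Ioo (0:ℝ) p) :=
        (hint1.mono_set hsub1).mul_const _
      refine (hA.add hB).congr ?_
      refine (MeasureTheory.ae_restrict_iff' measurableSet_Ioo).2 ?_
      filter_upwards [hSae] with t htS ht
      have h1 : D' t = D t := hDD' t htS (hsub1 ht)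
      have h2 : min p t - p * t = (1 - p) * t := by
        rw [min_eq_right ht.2.le]; ring
      simp only [Pi.add_apply]
      rw [h1, h2]
    · have hfe : (fun t => φ t * ((1 - p) * t)) = fun t => (1 - p) * (t * φ t) := by
        funext t; ring
      rw [hfe]
      simpa using hb0.const_mul (1 - p)
    · have hc : ContinuousAt (fun t => φ t * ((1 - p) * t)) p :=
        (hφca p ⟨hp0, hp1⟩).mul ((continuous_const.mul continuous_id).continuousAt)
      exact hc.tendsto.mono_left nhdsWithin_le_nhds
  -- FTC on (p, 1)
  have hI₂ : ∫ y in p..(1:ℝ), (D' y * (p * (1 - y)) + φ y * (-p))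
      = 0 - φ p * (p * (1 - p)) := by
    refine stmt18_ftc (f := fun t => φ t * (p * (1 - t))) hp1 ?_ ?_ ?_ ?_ ?_
    · exact (hφc.mono hsub2).mul (continuous_const.mul (continuous_const.sub continuous_id)).continuousOn
    · intro x hx
      have h1 := stmt18_deriv g g' μ r hr (hg x (hsub2 hx))
      have h2 : HasDerivAt (fun y : ℝ => p * (1 - y)) (-p) x := by
        simpa using ((hasDerivAt_const x (1:ℝ)).sub (hasDerivAt_id x)).const_mul p
      exact h1.mul h2.hasDerivWithinAt
    · rw [intervalIntegrable_iff_integrableOn_Ioo_of_le hp1.le]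
      have hA : IntegrableOn (fun t => D t * (min p t - p * t)) (Set.Ioo p 1) :=
        hint2.mono_set hsub2
      have hB : IntegrableOn (fun t => φ t * (-p)) (Set.Ioo p 1) :=
        (hint1.mono_set hsub2).mul_const _
      refine (hA.add hB).congr ?_
      refine (MeasureTheory.ae_restrict_iff' measurableSet_Ioo).2 ?_
      filter_upwards [hSae] with t htS ht
      have h1 : D' t = D t := hDD' t htS (hsub2 ht)
      have h2 : min p t - p * t = p * (1 - t) := by
        rw [min_eq_left ht.1.le]; ring
      simp only [Pi.add_apply]
      rw [h1, h2]
    · have hc : ContinuousAt (fun t => φ t * (p * (1 - t))) p :=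
        (hφca p ⟨hp0, hp1⟩).mul ((continuous_const.mul (continuous_const.sub continuous_id)).continuousAt)
      exact hc.tendsto.mono_left nhdsWithin_le_nhds
    · have hfe : (fun t => φ t * (p * (1 - t))) = fun t => p * ((1 - t) * φ t) := by
        funext t; ring
      rw [hfe]
      simpa using hb1.const_mul p
  -- convert interval integrals to set integrals
  have e1 : ∀ (a b : ℝ), a ≤ b → ∀ (f : ℝ → ℝ),
      ∫ t in a..b, f t = ∫ t in Set.Ioo a b, f t := by
    intro a b hab f
    rw [intervalIntegral.integral_of_le hab, MeasureTheory.integral_Ioc_eq_integral_Ioo]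
  -- compute the piece on (0, p)
  have hA₁ : ∫ t in Set.Ioo (0:ℝ) p, D t * (min p t - p * t)
      = φ p * ((1 - p) * p) - (1 - p) * ∫ t in Set.Ioo (0:ℝ) p, φ t := by
    have hcongr : ∫ t in Set.Ioo (0:ℝ) p, (D' t * ((1 - p) * t) + φ t * (1 - p))
        = ∫ t in Set.Ioo (0:ℝ) p, (D t * (min p t - p * t) + φ t * (1 - p)) := by
      apply MeasureTheory.integral_congr_ae
      refine (MeasureTheory.ae_restrict_iff' measurableSet_Ioo).2 ?_
      filter_upwards [hSae] with t htS ht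
      have h1 : D' t = D t := hDD' t htS (hsub1 ht)
      have h2 : min p t - p * t = (1 - p) * t := by
        rw [min_eq_right ht.2.le]; ring
      rw [h1, h2]
    have hadd : ∫ t in Set.Ioo (0:ℝ) p, (D t * (min p t - p * t) + φ t * (1 - p))
        = (∫ t in Set.Ioo (0:ℝ) p, D t * (min p t - p * t))
          + ∫ t in Set.Ioo (0:ℝ) p, φ t * (1 - p) :=
      MeasureTheory.integral_add (hint2.mono_set hsub1)
        ((hint1.mono_set hsub1).mul_const _)
    have hmul : ∫ t in Set.Ioo (0:ℝ) p, φ t * (1 - p)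
        = (∫ t in Set.Ioo (0:ℝ) p, φ t) * (1 - p) :=
      MeasureTheory.integral_mul_const _ _
    have := hI₁
    rw [e1 0 p hp0.le, hcongr, hadd, hmul] at this
    linarith
  -- compute the piece on (p, 1)
  have hA₂ : ∫ t in Set.Ioo p (1:ℝ), D t * (min p t - p * t)
      = -(φ p * (p * (1 - p))) + p * ∫ t in Set.Ioo p (1:ℝ), φ t := by
    have hcongr : ∫ t in Set.Ioo p (1:ℝ), (D' t * (p * (1 - t)) + φ t * (-p))
        = ∫ t in Set.Ioo p (1:ℝ), (D t * (min p t - p * t) + φ t * (-p)) := by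
      apply MeasureTheory.integral_congr_ae
      refine (MeasureTheory.ae_restrict_iff' measurableSet_Ioo).2 ?_
      filter_upwards [hSae] with t htS ht
      have h1 : D' t = D t := hDD' t htS (hsub2 ht)
      have h2 : min p t - p * t = p * (1 - t) := by
        rw [min_eq_left ht.1.le]; ring
      rw [h1, h2]
    have hadd : ∫ t in Set.Ioo p (1:ℝ), (D t * (min p t - p * t) + φ t * (-p))
        = (∫ t in Set.Ioo p (1:ℝ), D t * (min p t - p * t))
          + ∫ t in Set.Ioo p (1:ℝ), φ t * (-p) :=
      MeasureTheory.integral_add (hint2.mono_set hsub2)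
        ((hint1.mono_set hsub2).mul_const _)
    have hmul : ∫ t in Set.Ioo p (1:ℝ), φ t * (-p)
        = (∫ t in Set.Ioo p (1:ℝ), φ t) * (-p) :=
      MeasureTheory.integral_mul_const _ _
    have := hI₂
    rw [e1 p 1 hp1.le, hcongr, hadd, hmul] at this
    linarith
  -- split the full integral
  have hsplit : ∫ t in Set.Ioo (0:ℝ) 1, D t * (min p t - p * t)
      = (∫ t in Set.Ioo (0:ℝ) p, D t * (min p t - p * t))
        + ∫ t in Set.Ioo p (1:ℝ), D t * (min p t - p * t) := by
    rw [← e1 0 1 (by norm_num) _, ← e1 0 p hp0.le _, ← e1 p 1 hp1.le _]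
    exact (intervalIntegral.integral_add_adjacent_intervals hDw1 hDw2).symm
  calc ∫ t in Set.Ioo (0:ℝ) 1,
        (r : ℝ) * |g t - μ| ^ (r - 1) * Real.sign (g t - μ) * g' t * (min p t - p * t)
      = ∫ t in Set.Ioo (0:ℝ) 1, D t * (min p t - p * t) := rfl
    _ = (∫ t in Set.Ioo (0:ℝ) p, D t * (min p t - p * t))
        + ∫ t in Set.Ioo p (1:ℝ), D t * (min p t - p * t) := hsplit
    _ = p * (∫ t in Set.Ioo p 1, φ t) - (1 - p) * ∫ t in Set.Ioo (0:ℝ) p, φ t := by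
        rw [hA₁, hA₂]; ring
    _ = p * (∫ t in Set.Ioo p 1, |g t - μ| ^ r)
        - (1 - p) * ∫ t in Set.Ioo (0:ℝ) p, |g t - μ| ^ r := rfl
end
end
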